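/- Let Q = [0,1]ⁿ ⊂ ℝⁿ, v = (1,…,1), and let x ∈ ℝⁿ have all coordinates positive and not be proportional to v. Then the intersection of Q with the 2-dimensional subspace L spanned by v and x is a parallelogram with vertices 0, u, v, v − u for some u ∈ L on the boundary of Q lying in a coordinate hyperplane. -/

import Mathlib

open Pointwise


theorem cube_plane_section_parallelogram (n : ℕ) (hn : 2 ≤ n) (x : Fin n → ℝ)
    (hx : ∀ i, 0 < x i) (hnp : ∀ c : ℝ, x ≠ c • (fun _ => (1 : ℝ))) :
    ∃ u : Fin n → ℝ,
      u ∈ Submodule.span ℝ {(fun _ => (1 : ℝ) : Fin n → ℝ), x} ∧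
      (∀ i, 0 ≤ u i ∧ u i ≤ 1) ∧ (∃ i, u i = 0) ∧
      LinearIndependent ℝ ![u, (fun _ => (1 : ℝ) : Fin n → ℝ)] ∧
      (Submodule.span ℝ {(fun _ => (1 : ℝ) : Fin n → ℝ), x} : Set (Fin n → ℝ)) ∩
          {y | ∀ i, 0 ≤ y i ∧ y i ≤ 1} =
        convexHull ℝ {0, u, (fun _ => (1 : ℝ)),
          (fun _ => (1 : ℝ)) - u} := by
  have hne : (Finset.univ : Finset (Fin n)).Nonempty := by
    rw [Finset.univ_nonempty_iff]
    exact Fin.pos_iff_nonempty.mp (by omega)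
  obtain ⟨i0, -, h0⟩ := Finset.exists_min_image Finset.univ x hne
  obtain ⟨i1, -, h1⟩ := Finset.exists_max_image Finset.univ x hne
  have h0' : ∀ j, x i0 ≤ x j := fun j => h0 j (Finset.mem_univ j)
  have h1' : ∀ j, x j ≤ x i1 := fun j => h1 j (Finset.mem_univ j)
  set m := x i0 with hm
  set M := x i1 with hM
  set v : Fin n → ℝ := (fun _ => (1 : ℝ)) with hv
  have hmM : m < M := by
    rcases lt_or_eq_of_le (h0' i1) with h | h
    · exact h
    · exfalso
      apply hnp m
      funext j
      have : x j = m := le_antisymm (h ▸ h1' j) (h0' j)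
      simpa [hv] using this
  have hMm : (0:ℝ) < M - m := sub_pos.mpr hmM
  set u : Fin n → ℝ := fun i => (x i - m) / (M - m) with hu
  have hu0 : u i0 = 0 := by simp [hu, hm]
  have hu1 : u i1 = 1 := by
    simp only [hu]
    exact div_self (ne_of_gt hMm)
  have hub : ∀ i, 0 ≤ u i ∧ u i ≤ 1 := by
    intro i
    constructor
    · exact div_nonneg (sub_nonneg.mpr (h0' i)) hMm.le
    · rw [div_le_one hMm]
      exact sub_le_sub_right (h1' i) m
  have huspan : u ∈ Submodule.span ℝ {v, x} := by
    rw [Submodule.mem_span_pair]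
    refine ⟨-(m / (M - m)), 1 / (M - m), ?_⟩
    funext i
    simp only [Pi.add_apply, Pi.smul_apply, hv, hu, smul_eq_mul, mul_one]
    field_simp
    ring
  -- key representation lemma
  have hrep : ∀ s t : ℝ, 0 ≤ s → s ≤ 1 → 0 ≤ s + t → s + t ≤ 1 →
      s • v + t • u ∈ convexHull ℝ ({0, u, v, v - u} : Set (Fin n → ℝ)) := by
    intro s t hs0 hs1 hst0 hst1
    have hset : ({0, u} : Set (Fin n → ℝ)) + ({0, v - u} : Set (Fin n → ℝ)) = ({0, u, v, v - u} : Set (Fin n → ℝ)) := by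
      ext y
      simp only [Set.mem_add, Set.mem_insert_iff, Set.mem_singleton_iff]
      constructor
      · rintro ⟨a, (rfl | rfl), b, (rfl | rfl), rfl⟩ <;> simp
      · rintro (rfl | rfl | rfl | rfl)
        · exact ⟨0, Or.inl rfl, 0, Or.inl rfl, by simp⟩
        · exact ⟨u, Or.inr rfl, 0, Or.inl rfl, by simp⟩
        · exact ⟨u, Or.inr rfl, v - u, Or.inr rfl, by simp⟩
        · exact ⟨0, Or.inl rfl, v - u, Or.inr rfl, by simp⟩
    rw [← hset, convexHull_add]
    have h1mem : (s + t) • u ∈ convexHull ℝ ({0, u} : Set (Fin n → ℝ)) := by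
      rw [convexHull_pair, segment_eq_image]
      exact ⟨s + t, ⟨hst0, hst1⟩, by simp⟩
    have h2mem : s • (v - u) ∈ convexHull ℝ ({0, v - u} : Set (Fin n → ℝ)) := by
      rw [convexHull_pair, segment_eq_image]
      exact ⟨s, ⟨hs0, hs1⟩, by simp⟩
    have : s • v + t • u = (s + t) • u + s • (v - u) := by
      simp only [smul_sub, add_smul]
      abel
    rw [this]
    exact Set.add_mem_add h1mem h2mem
  refine ⟨u, huspan, hub, ⟨i0, hu0⟩, ?_, ?_⟩
  · rw [LinearIndependent.pair_iff]
    intro s t h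
    have h00 : s * u i0 + t = 0 := by
      have := congrFun h i0
      simpa [hv] using this
    have ht : t = 0 := by rw [hu0] at h00; linarith
    have h11 : s * u i1 + t = 0 := by
      have := congrFun h i1
      simpa [hv] using this
    have hs : s = 0 := by rw [hu1, ht] at h11; linarith
    exact ⟨hs, ht⟩
  · apply Set.Subset.antisymm
    · -- section ⊆ hull
      rintro y ⟨hyS, hyB⟩
      rw [SetLike.mem_coe, Submodule.mem_span_pair] at hyS
      obtain ⟨c, d, hcd⟩ := hyS
      set s := c + d * m with hs
      set t := d * (M - m) with ht
      have hyst : y = s • v + t • u := by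
        rw [← hcd]
        funext i
        simp only [Pi.add_apply, Pi.smul_apply, hv, hu, smul_eq_mul, mul_one, hs, ht]
        field_simp
        ring
      have hy0 : y i0 = s := by
        rw [hyst]; simp [hv, hu0]
      have hy1 : y i1 = s + t := by
        rw [hyst]; simp [hv, hu1]
      have hb0 := hyB i0
      have hb1 := hyB i1
      rw [hy0] at hb0
      rw [hy1] at hb1
      rw [hyst]
      exact hrep s t hb0.1 hb0.2 hb1.1 hb1.2
    · -- hull ⊆ section
      apply convexHull_min
      · rintro y (rfl | rfl | rfl | rfl)
        · exact ⟨Submodule.zero_mem _, fun i => by norm_num⟩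
        · exact ⟨huspan, hub⟩
        · refine ⟨Submodule.subset_span (Or.inl rfl), fun i => by norm_num [hv]⟩
        · refine ⟨Submodule.sub_mem _ (Submodule.subset_span (Or.inl rfl)) huspan,
            fun i => ?_⟩
          have := hub i
          constructor <;> simp [hv] <;> linarith [this.1, this.2]
      · apply Convex.inter (Submodule.convex _)
        have : {y : Fin n → ℝ | ∀ i, 0 ≤ y i ∧ y i ≤ 1} = Set.Icc 0 1 := by
          ext y
          simp [Set.mem_Icc, Pi.le_def, forall_and]
        rw [this]
        exact convex_Icc _ _
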